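/- Let P, Q be regular ω-posets and ⊒ ⊆ Q × P a ⌅-preserving refiner. Then the map X_⊒ : XP → XQ defined by X_⊒(Y) = (Y^⊑)_⌅ (the set of all elements of Q adjacent to every element of the image of Y under ⊑) is a well-defined continuous map between the clique-spectra. -/

import Mathlib

namespace OP

section OmegaPoset

variable (P : Type*) [PartialOrder P]

/-- The n-th cone of the poset: `cone 0` is the set of maximal elements. -/
def cone : ℕ → Set P
  | 0 => {p | ∀ q, ¬ p < q}
  | n + 1 => {p | ∀ q, p < q → q ∈ cone n}

/-- The n-th level: atoms (minimal elements) of the n-th cone. -/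
def level (n : ℕ) : Set P := {p | p ∈ cone P n ∧ ∀ q, q < p → q ∉ cone P n}

/-- An ω-poset: all levels finite and every element in some cone. -/
def IsOmegaPoset : Prop := (∀ n, (level P n).Finite) ∧ ∀ p : P, ∃ n, p ∈ cone P n

variable {P}

/-- `refines A C` : every element of `A` lies below some element of `C` (`A ≤ C`). -/
def refines (A C : Set P) : Prop := ∀ a ∈ A, ∃ c ∈ C, a ≤ c

/-- A cap is a subset refined by some level. -/
def IsCap (C : Set P) : Prop := ∃ n, refines (level P n) C

/-- A selector meets every cap. -/
def IsSelector (S : Set P) : Prop := ∀ C : Set P, IsCap C → (S ∩ C).Nonempty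

/-- `wedge p q` : `p` and `q` have a common lower bound. -/
def wedge (p q : P) : Prop := ∃ r, r ≤ p ∧ r ≤ q

def wedgeSet (p : P) : Set P := {q | wedge p q}

/-- The adjacency relation `p ⌅ q`. -/
def barwedge (p q : P) : Prop := ∀ C : Set P, IsCap C → ∃ c ∈ C, wedge p c ∧ wedge c q

/-- `p ⊲_C q`. -/
def starBelowOn (C : Set P) (p q : P) : Prop := ∀ c ∈ C, wedge p c → c ≤ q

/-- The star-below relation `p ⊲ q`. -/
def starBelow (p q : P) : Prop := ∃ n, starBelowOn (level P n) p q

/-- A clique: pairwise adjacent set. -/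
def IsClique (X : Set P) : Prop := ∀ p ∈ X, ∀ q ∈ X, barwedge p q

/-- Unbounded subset: meets `C^≥` for every cap `C`. -/
def IsUnbounded (X : Set P) : Prop := ∀ C : Set P, IsCap C → ∃ u ∈ X, ∃ c ∈ C, u ≤ c

variable (P)

/-- Regularity: every level is eventually star-refined by a later level. -/
def IsRegular : Prop :=
  ∀ m, ∃ n, m < n ∧ ∀ p ∈ level P n, ∃ q ∈ level P m, starBelow p q

/-- The spectrum: minimal selectors. -/
def Spec : Set (Set P) := {S | IsSelector S ∧ ∀ T ⊆ S, IsSelector T → T = S}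

def SpecT : Type _ := {S : Set P // S ∈ Spec P}

instance : TopologicalSpace (SpecT P) :=
  TopologicalSpace.generateFrom {U | ∃ p : P, U = {S : SpecT P | p ∈ S.1}}

/-- The clique-spectrum: unbounded maximal cliques. -/
def CliqueSpec : Set (Set P) :=
  {X | IsUnbounded X ∧ IsClique X ∧ ∀ Y : Set P, IsClique Y → X ⊆ Y → Y = X}

def CliqueSpecT : Type _ := {X : Set P // X ∈ CliqueSpec P}

instance : TopologicalSpace (CliqueSpecT P) :=
  TopologicalSpace.generateFrom {U | ∃ p : P, U = {X : CliqueSpecT P | p ∉ X.1}}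

variable {P}

/-- The basic open set `p_S`. -/
def pSOpen (p : P) : Set (SpecT P) := {S | p ∈ S.1}

/-- The closed set `p̄_S = {S : S ⊆ p^∧}`. -/
def pSBar (p : P) : Set (SpecT P) := {S | S.1 ⊆ wedgeSet p}

/-- Prime ω-poset: every basic open set is nonempty. -/
def IsPrimePoset (P : Type*) [PartialOrder P] : Prop := ∀ p : P, (pSOpen p).Nonempty

end OmegaPoset

end OP

namespace OP

section Refiners

variable {P Q : Type*} [PartialOrder P] [PartialOrder Q]

/-- A refiner: every cap of `Q` is refined through the relation by some cap of `P`. -/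
def IsRefinerRel (R : Q → P → Prop) : Prop :=
  ∀ C : Set Q, IsCap C → ∃ B : Set P, IsCap B ∧ ∀ b ∈ B, ∃ c ∈ C, R c b

/-- `∧`-preserving: `⊐ ∘ ∧ ∘ ⊏ ⊆ ∧`. -/
def WedgePres (R : Q → P → Prop) : Prop :=
  ∀ q p p' q', R q p → wedge p p' → R q' p' → wedge q q'

/-- `⌅`-preserving: `⊐ ∘ ⌅ ∘ ⊏ ⊆ ⌅`. -/
def BarwedgePres (R : Q → P → Prop) : Prop :=
  ∀ q p p' q', R q p → barwedge p p' → R q' p' → barwedge q q'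

/-- The star `⊐*` of a relation: `q ⊐* p` iff some cap `C` has `C ∩ p^∧ ⊏ q`. -/
def relStar (R : Q → P → Prop) (q : Q) (p : P) : Prop :=
  ∃ C : Set P, IsCap C ∧ ∀ c ∈ C, wedge p c → R q c

/-- Composition `▷ ∘ ⊐` with the star-above relation on `Q`. -/
def starAboveComp (R : Q → P → Prop) : Q → P → Prop :=
  fun q p => ∃ q', starBelow q' q ∧ R q' p

/-- A strong refiner: a `∧`-preserving refiner with `⊐ = ▷ * ⊐`. -/
def IsStrongRefiner (R : Q → P → Prop) : Prop :=
  IsRefinerRel R ∧ WedgePres R ∧ ∀ q p, R q p ↔ relStar (starAboveComp R) q p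

/-- `φ` is the continuous map associated to `R`, i.e. `φ(S) = S^{⊏ ⊲}`. -/
def specMapOf (R : Q → P → Prop) (φ : SpecT P → SpecT Q) : Prop :=
  ∀ S : SpecT P, (φ S).1 = {r : Q | ∃ p ∈ S.1, ∃ q, R q p ∧ starBelow q r}

/-- The relation `⊒_φ`: `q ⊒_φ p` iff `q̄_S ⊇ φ[p̄_S]`. -/
def relBarPhi (φ : SpecT P → SpecT Q) (q : Q) (p : P) : Prop :=
  ∀ S : SpecT P, S ∈ pSBar p → φ S ∈ pSBar q

/-- The relation `⊐_φ`: `q ⊐_φ p` iff `q_S ⊇ φ[p̄_S]`. -/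
def relPhi (φ : SpecT P → SpecT Q) (q : Q) (p : P) : Prop :=
  ∀ S : SpecT P, S ∈ pSBar p → φ S ∈ pSOpen q

/-- An arrow: a finite relation with `← ∘ ⌅` co-surjective. -/
def IsArrow (A : Q → P → Prop) : Prop :=
  {x : Q × P | A x.1 x.2}.Finite ∧ ∀ p : P, ∃ q p', A q p' ∧ barwedge p' p

/-- `A ≤ B` for relations: `A ⊆ ≤ ∘ B ∘ ≥`. -/
def arrowLe (A B : Q → P → Prop) : Prop :=
  ∀ q p, A q p → ∃ q' p', q ≤ q' ∧ p ≤ p' ∧ B q' p'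

/-- The relation `⟨←` of an arrow: `q ⟨← p` iff `p^{⌅→} ⊲ q`. -/
def angleRel (A : Q → P → Prop) (q : Q) (p : P) : Prop :=
  ∀ q', (∃ p', barwedge p p' ∧ A q' p') → starBelow q' q

/-- The relation `⋂ₙ (←ₙ)̄_S` on spectra determined by a sequence of arrows. -/
def seqGraph (A : ℕ → Q → P → Prop) (T : SpecT Q) (S : SpecT P) : Prop :=
  ∀ n, ∃ q p, A n q p ∧ T.1 ⊆ wedgeSet q ∧ S.1 ⊆ wedgeSet p

end Refiners

end OP

open OP

section Aux

variable {P : Type*} [PartialOrder P]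

lemma cone_succ_mono (n : ℕ) : cone P n ⊆ cone P (n + 1) := by
  induction n with
  | zero => intro p hp q hq; exact absurd hq (hp q)
  | succ n ih => intro p hp q hq; exact ih (hp q hq)

lemma cone_mono {n m : ℕ} (h : n ≤ m) : cone P n ⊆ cone P m := by
  induction h with
  | refl => exact subset_rfl
  | @step m _ ih => exact ih.trans (cone_succ_mono m)

lemma wedge_symm {p q : P} (h : wedge p q) : wedge q p := by
  obtain ⟨r, h1, h2⟩ := h; exact ⟨r, h2, h1⟩

lemma wedge_mono_right {p q q' : P} (h : wedge p q) (hq : q ≤ q') : wedge p q' := by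
  obtain ⟨r, h1, h2⟩ := h; exact ⟨r, h1, h2.trans hq⟩

lemma wedge_mono_left {p p' q : P} (h : wedge p q) (hp : p ≤ p') : wedge p' q := by
  obtain ⟨r, h1, h2⟩ := h; exact ⟨r, h1.trans hp, h2⟩

attribute [local instance] Classical.propDecidable

noncomputable def jdx (hω : IsOmegaPoset P) (p : P) : ℕ := Nat.find (hω.2 p)

lemma jdx_mem (hω : IsOmegaPoset P) (p : P) : p ∈ cone P (jdx hω p) := Nat.find_spec (hω.2 p)

lemma jdx_le (hω : IsOmegaPoset P) {p : P} {n : ℕ} (h : p ∈ cone P n) : jdx hω p ≤ n :=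
  Nat.find_min' _ h

lemma jdx_lt_of_lt (hω : IsOmegaPoset P) {p q : P} (h : p < q) : jdx hω q < jdx hω p := by
  have hp := jdx_mem hω p
  rcases Nat.eq_zero_or_pos (jdx hω p) with h0 | h0
  · rw [h0] at hp; exact absurd h (hp q)
  · obtain ⟨k, hk⟩ := Nat.exists_eq_succ_of_ne_zero h0.ne'
    rw [hk] at hp ⊢
    exact Nat.lt_succ_of_le (jdx_le hω (hp q h))

/-- Every element of `cone n` is above a `level n` element. -/
lemma exists_level_le (hω : IsOmegaPoset P) {n : ℕ} {p : P} (hp : p ∈ cone P n) :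
    ∃ r ∈ level P n, r ≤ p := by
  have H : ∀ k, ∀ p : P, p ∈ cone P n → n - jdx hω p = k → ∃ r ∈ level P n, r ≤ p := by
    intro k
    induction k using Nat.strong_induction_on with
    | _ k ih =>
      intro p hp hk
      by_cases hl : p ∈ level P n
      · exact ⟨p, hl, le_rfl⟩
      · have : ∃ q, q < p ∧ q ∈ cone P n := by
          by_contra hcon
          push_neg at hcon
          exact hl ⟨hp, fun q hq => hcon q hq⟩
        obtain ⟨q, hqp, hq⟩ := this
        have h1 : jdx hω p < jdx hω q := jdx_lt_of_lt hω hqp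
        have h2 : jdx hω q ≤ n := jdx_le hω hq
        have h3 : jdx hω p ≤ n := jdx_le hω hp
        have : n - jdx hω q < k := by omega
        obtain ⟨r, hr, hrq⟩ := ih _ this q hq rfl
        exact ⟨r, hr, hrq.trans hqp.le⟩
  exact H _ p hp rfl

/-- Every element is below a maximal element. -/
lemma exists_cone0_ge (hω : IsOmegaPoset P) (p : P) : ∃ r ∈ cone P 0, p ≤ r := by
  have H : ∀ k, ∀ p : P, jdx hω p = k → ∃ r ∈ cone P 0, p ≤ r := by
    intro k
    induction k using Nat.strong_induction_on with
    | _ k ih =>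
      intro p hk
      by_cases h0 : p ∈ cone P 0
      · exact ⟨p, h0, le_rfl⟩
      · have : ∃ q, p < q := by
          by_contra hcon; push_neg at hcon; exact h0 hcon
        obtain ⟨q, hq⟩ := this
        have : jdx hω q < k := hk ▸ jdx_lt_of_lt hω hq
        obtain ⟨r, hr, hqr⟩ := ih _ this q rfl
        exact ⟨r, hr, hq.le.trans hqr⟩
  exact H _ p rfl

lemma level_zero : level P 0 = cone P 0 := by
  ext p
  constructor
  · exact fun h => h.1
  · intro h
    exact ⟨h, fun q hq hq0 => hq0 p hq⟩

lemma mem_level_of_diff {n : ℕ} {p : P} (hp : p ∈ cone P (n + 1)) (hn : p ∉ cone P n) :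
    p ∈ level P (n + 1) :=
  ⟨hp, fun q hq hqc => hn (hqc p hq)⟩

lemma exists_level_ge (hω : IsOmegaPoset P) {n : ℕ} {p : P} (hn : p ∉ cone P n) :
    ∃ r ∈ level P (n + 1), p ≤ r := by
  have H : ∀ k, ∀ p : P, p ∉ cone P n → jdx hω p = k → ∃ r ∈ level P (n + 1), p ≤ r := by
    intro k
    induction k using Nat.strong_induction_on with
    | _ k ih =>
      intro p hp hk
      by_cases h1 : p ∈ cone P (n + 1)
      · exact ⟨p, mem_level_of_diff h1 hp, le_rfl⟩
      · have : ∃ q, p < q ∧ q ∉ cone P n := by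
          by_contra hcon; push_neg at hcon; exact h1 fun q hq => hcon q hq
        obtain ⟨q, hpq, hq⟩ := this
        have : jdx hω q < k := hk ▸ jdx_lt_of_lt hω hpq
        obtain ⟨r, hr, hqr⟩ := ih _ this q hq rfl
        exact ⟨r, hr, hpq.le.trans hqr⟩
  exact H _ p hn rfl

/-- Every element wedges some element of every level. -/
lemma exists_level_wedge (hω : IsOmegaPoset P) (p : P) (n : ℕ) :
    ∃ r ∈ level P n, wedge p r := by
  cases n with
  | zero =>
      obtain ⟨r, hr, hpr⟩ := exists_cone0_ge hω p
      exact ⟨r, by rw [level_zero]; exact hr, ⟨p, le_rfl, hpr⟩⟩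
  | succ n =>
      by_cases h : p ∈ cone P (n + 1)
      · obtain ⟨r, hr, hrp⟩ := exists_level_le hω h
        exact ⟨r, hr, ⟨r, hrp, le_rfl⟩⟩
      · have hn : p ∉ cone P n := fun hc => h (cone_succ_mono n hc)
        obtain ⟨r, hr, hpr⟩ := exists_level_ge hω hn
        exact ⟨r, hr, ⟨p, le_rfl, hpr⟩⟩

lemma level_isCap (n : ℕ) : IsCap (level P n) := ⟨n, fun a ha => ⟨a, ha, le_rfl⟩⟩

/-- Every element wedges some element of every cap. -/
lemma cap_wedge (hω : IsOmegaPoset P) {C : Set P} (hC : IsCap C) (p : P) :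
    ∃ c ∈ C, wedge p c := by
  obtain ⟨n, hn⟩ := hC
  obtain ⟨r, hr, hw⟩ := exists_level_wedge hω p n
  obtain ⟨c, hc, hrc⟩ := hn r hr
  exact ⟨c, hc, wedge_mono_right hw hrc⟩

lemma barwedge_self (hω : IsOmegaPoset P) (p : P) : barwedge p p := by
  intro C hC
  obtain ⟨c, hc, hw⟩ := cap_wedge hω hC p
  exact ⟨c, hc, hw, wedge_symm hw⟩

lemma barwedge_mono_left {p p' q : P} (h : barwedge p q) (hp : p ≤ p') : barwedge p' q := by
  intro C hC
  obtain ⟨c, hc, h1, h2⟩ := h C hC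
  exact ⟨c, hc, wedge_mono_left h1 hp, h2⟩

lemma barwedge_mono_right {p q q' : P} (h : barwedge p q) (hq : q ≤ q') : barwedge p q' := by
  intro C hC
  obtain ⟨c, hc, h1, h2⟩ := h C hC
  exact ⟨c, hc, h1, wedge_mono_right h2 hq⟩

/-- Failure of `barwedge` is witnessed at a level. -/
lemma not_barwedge_level {q r : P} (h : ¬ barwedge q r) :
    ∃ N, ∀ c ∈ level P N, ¬ (wedge q c ∧ wedge c r) := by
  unfold barwedge at h
  push_neg at h
  obtain ⟨C, hC, hno⟩ := h
  obtain ⟨N, hN⟩ := hC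
  refine ⟨N, fun c hc h12 => ?_⟩
  obtain ⟨c0, hc0, hcc0⟩ := hN c hc
  exact hno c0 hc0 (wedge_mono_right h12.1 hcc0) (wedge_mono_left h12.2 hcc0)

/-- Maximal cliques are upward closed. -/
lemma cliqueSpec_upclosed (hω : IsOmegaPoset P) {Y : Set P} (hY : Y ∈ CliqueSpec P)
    {u b : P} (hu : u ∈ Y) (hub : u ≤ b) : b ∈ Y := by
  have hcl : IsClique (insert b Y) := by
    intro p hp r hr
    rcases hp with hp | hp <;> rcases hr with hr | hr
    · rw [hp, hr]; exact barwedge_self hω b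
    · rw [hp]; exact barwedge_mono_left (hY.2.1 u hu r hr) hub
    · rw [hr]; exact barwedge_mono_right (hY.2.1 p hp u hu) hub
    · exact hY.2.1 p hp r hr
  have := hY.2.2 (insert b Y) hcl (Set.subset_insert b Y)
  rw [← this]
  exact Set.mem_insert b Y

/-- The `barwedge`-closure of an unbounded clique is a clique. -/
lemma wedgeClosure_clique (hω : IsOmegaPoset P) (hreg : IsRegular P)
    {W : Set P} (hWu : IsUnbounded W) (hWc : IsClique W) :
    IsClique {q : P | ∀ r ∈ W, barwedge q r} := by
  intro q hq q' hq' C hC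
  obtain ⟨m, hm⟩ := hC
  obtain ⟨n, _, hn⟩ := hreg m
  obtain ⟨w, hw, p, hp, hwp⟩ := hWu (level P n) (level_isCap n)
  obtain ⟨s, hs, k, hk⟩ := hn p hp
  obtain ⟨c, hc, hqc, hcw⟩ := hq w hw (level P k) (level_isCap k)
  obtain ⟨c', hc', hq'c', hc'w⟩ := hq' w hw (level P k) (level_isCap k)
  have hcs : c ≤ s := hk c hc (wedge_symm (wedge_mono_right hcw hwp))
  have hc's : c' ≤ s := hk c' hc' (wedge_symm (wedge_mono_right hc'w hwp))
  obtain ⟨c0, hc0, hsc0⟩ := hm s hs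
  exact ⟨c0, hc0, wedge_mono_right hqc (hcs.trans hsc0),
    wedge_symm (wedge_mono_right hq'c' (hc's.trans hsc0))⟩

end Aux

open OP in
/-- A `⌅`-preserving refiner between regular ω-posets induces a well-defined
continuous map `Y ↦ (Y^⊑)_⌅` between clique-spectra. -/
theorem stmt7 {P Q : Type*} [PartialOrder P] [PartialOrder Q]
    (hP : IsOmegaPoset P) (hregP : IsRegular P) (hQ : IsOmegaPoset Q) (hregQ : IsRegular Q)
    (R : Q → P → Prop) (href : IsRefinerRel R) (hbw : BarwedgePres R) :
    ∃ f : CliqueSpecT P → CliqueSpecT Q, Continuous f ∧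
      ∀ Y : CliqueSpecT P, (f Y).1 = {q : Q | ∀ r : Q, (∃ y ∈ Y.1, R r y) → barwedge q r} := by
  classical
  -- Part 1: well-definedness
  have hZmem : ∀ Y ∈ CliqueSpec P,
      {q : Q | ∀ r : Q, (∃ y ∈ Y, R r y) → barwedge q r} ∈ CliqueSpec Q := by
    intro Y hY
    have hWc : IsClique {r : Q | ∃ y ∈ Y, R r y} := by
      rintro r ⟨y, hy, hr⟩ r' ⟨y', hy', hr'⟩
      exact hbw r y y' r' hr (hY.2.1 y hy y' hy') hr'
    have hWu : IsUnbounded {r : Q | ∃ y ∈ Y, R r y} := by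
      intro C hC
      obtain ⟨B, hBcap, hB⟩ := href C hC
      obtain ⟨u, hu, t, ht, hut⟩ := hY.1 B hBcap
      have htY : t ∈ Y := cliqueSpec_upclosed hP hY hu hut
      obtain ⟨c, hc, hRct⟩ := hB t ht
      exact ⟨c, ⟨t, htY, hRct⟩, c, hc, le_rfl⟩
    have hWZ : {r : Q | ∃ y ∈ Y, R r y} ⊆ {q : Q | ∀ r : Q, (∃ y ∈ Y, R r y) → barwedge q r} :=
      fun r hr r' hr' => hWc r hr r' hr'
    have hZc : IsClique {q : Q | ∀ r : Q, (∃ y ∈ Y, R r y) → barwedge q r} :=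
      wedgeClosure_clique hQ hregQ hWu hWc
    refine ⟨?_, hZc, ?_⟩
    · intro C hC
      obtain ⟨u, huW, c, hc, huc⟩ := hWu C hC
      exact ⟨u, hWZ huW, c, hc, huc⟩
    · intro Y' hY'c hsub
      apply Set.Subset.antisymm _ hsub
      intro z hz r hrW
      exact hY'c z hz r (hsub (hWZ hrW))
  -- Part 2: the key finite-separation lemma for continuity
  have key : ∀ Y ∈ CliqueSpec P, ∀ q : Q,
      (∃ r, (∃ y ∈ Y, R r y) ∧ ¬ barwedge q r) →
      ∃ F : Set P, F.Finite ∧ (∀ p ∈ F, p ∉ Y) ∧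
        ∀ Y' ∈ CliqueSpec P, (∀ p ∈ F, p ∉ Y') →
          ∃ r, (∃ y ∈ Y', R r y) ∧ ¬ barwedge q r := by
    intro Y hY q hq
    obtain ⟨r0, ⟨y0, hy0, hR0⟩, hnb⟩ := hq
    obtain ⟨N, hN⟩ := not_barwedge_level hnb
    obtain ⟨N', _, hN'⟩ := hregQ N
    obtain ⟨B, hBcap, hB⟩ := href (level Q N') (level_isCap N')
    obtain ⟨m, hm⟩ := hBcap
    refine ⟨{b' | b' ∈ level P m ∧ ∃ b ∈ B, b' ≤ b ∧ ∃ c' ∈ level Q N', R c' b ∧ barwedge q c'},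
      (hP.1 m).subset (fun x hx => hx.1), ?_, ?_⟩
    · rintro b' ⟨hb'm, b, hbB, hb'b, c', hc'N', hRc', hbwqc'⟩ hb'Y
      have hbY : b ∈ Y := cliqueSpec_upclosed hP hY hb'Y hb'b
      have hby0 : barwedge b y0 := hY.2.1 b hbY y0 hy0
      have hc'r0 : barwedge c' r0 := hbw c' b y0 r0 hRc' hby0 hR0
      obtain ⟨c, hcN, K, hK⟩ := hN' c' hc'N'
      obtain ⟨d, hdK, hqd, hdc'⟩ := hbwqc' (level Q K) (level_isCap K)
      obtain ⟨d', hd'K, hc'd', hd'r0⟩ := hc'r0 (level Q K) (level_isCap K)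
      have hdc : d ≤ c := hK d hdK (wedge_symm hdc')
      have hd'c : d' ≤ c := hK d' hd'K hc'd'
      exact hN c hcN ⟨wedge_mono_right hqd hdc, wedge_mono_left hd'r0 hd'c⟩
    · intro Y' hY' havoid
      obtain ⟨u, hu, b'', hb''m, hub''⟩ := hY'.1 (level P m) (level_isCap m)
      have hb''Y' : b'' ∈ Y' := cliqueSpec_upclosed hP hY' hu hub''
      obtain ⟨b, hbB, hb''b⟩ := hm b'' hb''m
      have hbY' : b ∈ Y' := cliqueSpec_upclosed hP hY' hb''Y' hb''b
      obtain ⟨c', hc'N', hRc'⟩ := hB b hbB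
      refine ⟨c', ⟨b, hbY', hRc'⟩, fun hbad => ?_⟩
      exact havoid b'' ⟨hb''m, b, hbB, hb''b, c', hc'N', hRc', hbad⟩ hb''Y'
  -- Part 3: the openness of the basic preimages
  have main : ∀ q : Q, IsOpen {Y : CliqueSpecT P | ∃ r, (∃ y ∈ Y.1, R r y) ∧ ¬ barwedge q r} := by
    intro q
    choose F hFfin hFY hFforce using
      fun (Y0 : CliqueSpecT P) (h : ∃ r, (∃ y ∈ Y0.1, R r y) ∧ ¬ barwedge q r) =>
        key Y0.1 Y0.2 q h
    have hEq : {Y : CliqueSpecT P | ∃ r, (∃ y ∈ Y.1, R r y) ∧ ¬ barwedge q r}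
        = ⋃ (Y0 : CliqueSpecT P) (h : ∃ r, (∃ y ∈ Y0.1, R r y) ∧ ¬ barwedge q r),
            ⋂ p ∈ F Y0 h, {Y : CliqueSpecT P | p ∉ Y.1} := by
      apply Set.Subset.antisymm
      · intro Y hY
        refine Set.mem_iUnion.mpr ⟨Y, Set.mem_iUnion.mpr ⟨hY, ?_⟩⟩
        simp only [Set.mem_iInter]
        intro p hp
        exact hFY Y hY p hp
      · intro Y hY
        obtain ⟨Y0, hY0⟩ := Set.mem_iUnion.mp hY
        obtain ⟨h, hmem⟩ := Set.mem_iUnion.mp hY0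
        simp only [Set.mem_iInter] at hmem
        exact hFforce Y0 h Y.1 Y.2 (fun p hp => hmem p hp)
    rw [hEq]
    refine isOpen_iUnion fun Y0 => isOpen_iUnion fun h => ?_
    exact (hFfin Y0 h).isOpen_biInter fun p _ =>
      TopologicalSpace.isOpen_generateFrom_of_mem ⟨p, rfl⟩
  -- Part 4: assemble
  refine ⟨fun Y => ⟨_, hZmem Y.1 Y.2⟩, ?_, fun Y => rfl⟩
  constructor
  intro U hU
  have hU' : TopologicalSpace.GenerateOpen
      {V | ∃ p : Q, V = {X : CliqueSpecT Q | p ∉ X.1}} U := hU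
  clear hU
  induction hU' with
  | basic V hV =>
      obtain ⟨q, rfl⟩ := hV
      have hpre : (fun Y : CliqueSpecT P =>
            (⟨_, hZmem Y.1 Y.2⟩ : CliqueSpecT Q)) ⁻¹' {X : CliqueSpecT Q | q ∉ X.1}
          = {Y : CliqueSpecT P | ∃ r, (∃ y ∈ Y.1, R r y) ∧ ¬ barwedge q r} := by
        ext Y
        show (¬ ∀ r : Q, (∃ y ∈ Y.1, R r y) → barwedge q r) ↔
          (∃ r, (∃ y ∈ Y.1, R r y) ∧ ¬ barwedge q r)
        constructor
        · intro h
          by_contra hcon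
          push_neg at hcon
          exact h hcon
        · rintro ⟨r, hr, hnb⟩ h
          exact hnb (h r hr)
      have hmain := main q
      rw [← hpre] at hmain
      exact hmain
  | univ => exact isOpen_univ
  | inter V1 V2 _ _ ih1 ih2 => exact ih1.inter ih2
  | sUnion S _ ih =>
      have hbu := isOpen_biUnion fun s hs => ih s hs
      convert hbu using 1
      exact Set.preimage_sUnion
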